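/- Let Θ : ℂ → ℂ be holomorphic on all of ℂ with Θ(v) ≠ 0 for every v ∈ ℂ, and suppose that |Θ(v + r)| = |Θ(v)| for all v ∈ ℂ and all r ∈ ℝ. Then there exist A ∈ ℂ and β ∈ ℝ such that Θ(z) = A·exp(i·β·z) for all z ∈ ℂ. -/

import Mathlib

open Real Complex

/-- Key analytic step of Proposition 2.1: a nonvanishing entire function whose
modulus is invariant under all real translations is a multiple of an
exponential with purely imaginary linear exponent. -/
theorem nonvanishing_real_translation_invariant_modulus
    (Θ : ℂ → ℂ) (hΘ : Differentiable ℂ Θ) (hne : ∀ v : ℂ, Θ v ≠ 0)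
    (hmod : ∀ v : ℂ, ∀ r : ℝ, ‖Θ (v + (r : ℂ))‖ = ‖Θ v‖) :
    ∃ (A : ℂ) (β : ℝ), ∀ z : ℂ, Θ z = A * Complex.exp (Complex.I * (β : ℂ) * z) := by
  -- Step 1: for each real r, z ↦ Θ(z+r)/Θ(z) is entire of modulus 1, hence constant.
  have key : ∀ (z : ℂ) (r : ℝ), Θ (z + (r : ℂ)) * Θ 0 = Θ (r : ℂ) * Θ z := by
    intro z r
    set F : ℂ → ℂ := fun w => Θ (w + (r : ℂ)) / Θ w with hF
    have hFdiff : Differentiable ℂ F :=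
      (hΘ.comp (differentiable_id.add_const _)).div hΘ hne
    have hFnorm : ∀ w, ‖F w‖ = 1 := by
      intro w
      simp only [hF, norm_div, hmod w r, div_self (norm_ne_zero_iff.mpr (hne w))]
    have hFbdd : Bornology.IsBounded (Set.range F) := by
      apply Bornology.IsBounded.subset (Metric.isBounded_closedBall (x := (0:ℂ)) (r := 1))
      rintro _ ⟨w, rfl⟩
      simpa [Metric.mem_closedBall, dist_zero_right] using (hFnorm w).le
    have hc : F z = F 0 := hFdiff.apply_eq_apply_of_bounded hFbdd z 0
    have h0 : F 0 = Θ (r : ℂ) / Θ 0 := by simp [hF]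
    rw [h0] at hc
    have hc' : Θ (z + (r : ℂ)) / Θ z = Θ (r : ℂ) / Θ 0 := hc
    exact (div_eq_div_iff (hne z) (hne 0)).mp hc'
  -- Step 2: differentiate in r at 0 to get Θ' z * Θ 0 = Θ' 0 * Θ z.
  have hder : ∀ z : ℂ, deriv Θ z * Θ 0 = deriv Θ 0 * Θ z := by
    intro z
    have h1 : HasDerivAt (fun r : ℝ => Θ (z + (r : ℂ)) * Θ 0)
        (deriv Θ z * Θ 0) 0 := by
      have hz : HasDerivAt (fun w : ℂ => Θ (z + w)) (deriv Θ z) 0 := by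
        have hinner : HasDerivAt (fun w : ℂ => z + w) 1 0 := by
          simpa using (hasDerivAt_id (0:ℂ)).const_add z
        have := (hΘ (z + 0)).hasDerivAt.comp (0:ℂ) hinner
        simpa [Function.comp_def] using this
      exact (hz.comp_ofReal).mul_const (Θ 0)
    have h2 : HasDerivAt (fun r : ℝ => Θ (r : ℂ) * Θ z)
        (deriv Θ 0 * Θ z) 0 := by
      have h0 : HasDerivAt (fun w : ℂ => Θ w) (deriv Θ 0) 0 := (hΘ 0).hasDerivAt
      simpa using (h0.comp_ofReal).mul_const (Θ z)
    have heq : (fun r : ℝ => Θ (z + (r : ℂ)) * Θ 0) = fun r : ℝ => Θ (r : ℂ) * Θ z := by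
      funext r; exact key z r
    rw [heq] at h1
    exact h1.unique h2
  set c : ℂ := deriv Θ 0 / Θ 0 with hcdef
  have hΘ' : ∀ z : ℂ, deriv Θ z = c * Θ z := by
    intro z
    have h := hder z
    rw [hcdef, div_mul_eq_mul_div, eq_div_iff (hne 0)]
    linear_combination h
  -- Step 3: Θ z = Θ 0 * exp (c z).
  have hsol : ∀ z : ℂ, Θ z = Θ 0 * Complex.exp (c * z) := by
    have hconst : ∀ z : ℂ, Θ z * Complex.exp (-(c * z)) = Θ 0 * Complex.exp (-(c * 0)) := by
      intro z
      set G : ℂ → ℂ := fun w => Θ w * Complex.exp (-(c * w)) with hG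
      have hGd : Differentiable ℂ G :=
        hΘ.mul (Complex.differentiable_exp.comp ((differentiable_const c).mul differentiable_id).neg)
      have hGderiv : ∀ w, deriv G w = 0 := by
        intro w
        have he : HasDerivAt (fun u : ℂ => Complex.exp (-(c * u)))
            (Complex.exp (-(c * w)) * (-c)) w := by
          have : HasDerivAt (fun u : ℂ => -(c * u)) (-c) w := by
            simpa [Pi.neg_def] using (((hasDerivAt_id w).const_mul c).neg)
          simpa [Function.comp_def] using (Complex.hasDerivAt_exp (-(c * w))).comp w this
        have hGw : HasDerivAt G (deriv Θ w * Complex.exp (-(c * w)) +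
            Θ w * (Complex.exp (-(c * w)) * (-c))) w :=
          (hΘ w).hasDerivAt.mul he
        rw [hGw.deriv, hΘ' w]
        ring
      have := is_const_of_deriv_eq_zero hGd hGderiv z 0
      simpa [hG] using this
    intro z
    have h' : Θ z * Complex.exp (-(c * z)) = Θ 0 := by simpa using hconst z
    calc Θ z = Θ z * Complex.exp (-(c * z)) * Complex.exp (c * z) := by
              rw [mul_assoc, ← Complex.exp_add]; simp
      _ = Θ 0 * Complex.exp (c * z) := by rw [h']
  -- Step 4: Re c = 0.
  have hre : c.re = 0 := by
    have h1 : ‖Θ ((1:ℝ) : ℂ)‖ = ‖Θ 0‖ := by simpa using hmod 0 1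
    rw [hsol ((1:ℝ):ℂ), norm_mul] at h1
    have h0 : ‖Θ 0‖ ≠ 0 := norm_ne_zero_iff.mpr (hne 0)
    have h2 : ‖Complex.exp (c * ((1:ℝ):ℂ))‖ = 1 := by
      rcases mul_right_eq_self₀.mp h1 with h | h
      · exact h
      · exact absurd h h0
    rw [Complex.norm_exp] at h2
    have := Real.exp_eq_one_iff _ |>.mp h2
    simpa using this
  refine ⟨Θ 0, c.im, fun z => ?_⟩
  have hc : c = Complex.I * (c.im : ℂ) := by
    apply Complex.ext <;> simp [hre]
  rw [hsol z, ← hc]
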